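/- Let g_1,...,g_b: {-1,1}^r → {-1,1} each satisfy Ê g_j(S) = 0 for all S with 1 ≤ |S| ≤ k, and let F: {-1,1}^b → ℝ be any function. Then f: {-1,1}^{br} → ℝ defined by f(x) = F(g_1(x_1,...,x_r), ..., g_b(x_{(b-1)r+1},...,x_{br})) satisfies f̂(S) = 0 for all S ⊆ {1,...,br} with 1 ≤ |S| ≤ k. -/

import Mathlib

/-- The value in `{-1,1}` of a Boolean (`1 = TRUE`). -/
noncomputable def bval (v : Bool) : ℝ := if v then 1 else -1

/-- Fourier coefficient `f̂(S) = E[f · W_S]` on the uniform cube `{-1,1}^ι`. -/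
noncomputable def cubeCoeff {ι : Type*} [Fintype ι] [DecidableEq ι]
    (f : (ι → Bool) → ℝ) (S : Finset ι) : ℝ :=
  (∑ x, f x * ∏ i ∈ S, (if x i then (1 : ℝ) else -1)) / 2 ^ (Fintype.card ι)

lemma delta_eq (u v : Bool) : (1 + bval u * bval v) / 2 = if u = v then (1:ℝ) else 0 := by
  cases u <;> cases v <;> norm_num [bval]

lemma sumA {r : ℕ} (T : Finset (Fin r)) (hT : T.Nonempty) :
    ∑ y : Fin r → Bool, ∏ i ∈ T, bval (y i) = 0 := by
  have h1 : ∀ y : Fin r → Bool, ∏ i ∈ T, bval (y i)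
      = ∏ i : Fin r, (if i ∈ T then bval (y i) else 1) := by
    intro y
    rw [Finset.prod_ite_mem, Finset.univ_inter]
  simp_rw [h1]
  rw [← Fintype.piFinset_univ,
    ← Finset.prod_univ_sum (t := fun _ : Fin r => (Finset.univ : Finset Bool))
      (f := fun i c => if i ∈ T then bval c else 1)]
  obtain ⟨i0, hi0⟩ := hT
  apply Finset.prod_eq_zero (Finset.mem_univ i0)
  simp [hi0, bval]

lemma blockFact {b r : ℕ} (h : Fin b → (Fin r → Bool) → ℝ) (S : Finset (Fin b × Fin r)) :
    ∑ x : Fin b × Fin r → Bool, (∏ j, h j fun i => x (j, i)) * ∏ p ∈ S, bval (x p)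
    = ∏ j, ∑ y : Fin r → Bool, h j y *
        ∏ i ∈ (S.filter fun p => p.1 = j).image Prod.snd, bval (y i) := by
  calc ∑ x : Fin b × Fin r → Bool, (∏ j, h j fun i => x (j, i)) * ∏ p ∈ S, bval (x p)
      = ∑ y : Fin b → Fin r → Bool, (∏ j, h j (y j)) * ∏ p ∈ S, bval (y p.1 p.2) := by
        rw [← Equiv.sum_comp (Equiv.curry (Fin b) (Fin r) Bool).symm]
        rfl
    _ = ∑ y : Fin b → Fin r → Bool, ∏ j, (h j (y j) *
          ∏ i ∈ (S.filter fun p => p.1 = j).image Prod.snd, bval (y j i)) := by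
        apply Finset.sum_congr rfl
        intro y _
        rw [Finset.prod_mul_distrib]
        congr 1
        rw [← Finset.prod_fiberwise_of_maps_to (g := Prod.fst)
          (fun p _ => Finset.mem_univ p.1) (fun p => bval (y p.1 p.2))]
        apply Finset.prod_congr rfl
        intro j _
        rw [Finset.prod_image]
        · apply Finset.prod_congr rfl
          intro p hp
          simp only [Finset.mem_filter] at hp
          rw [hp.2]
        · intro p hp q hq hpq
          simp only [Finset.mem_coe, Finset.mem_filter] at hp hq
          exact Prod.ext (hp.2.trans hq.2.symm) hpq
    _ = ∏ j, ∑ y : Fin r → Bool, h j y *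
          ∏ i ∈ (S.filter fun p => p.1 = j).image Prod.snd, bval (y i) := by
        rw [Finset.prod_univ_sum, Fintype.piFinset_univ]

theorem stmt_18 (r b k : ℕ)
    (g : Fin b → (Fin r → Bool) → Bool)
    (hg : ∀ (j : Fin b) (S : Finset (Fin r)), 1 ≤ S.card → S.card ≤ k →
      cubeCoeff (fun y => bval (g j y)) S = 0)
    (F : (Fin b → Bool) → ℝ)
    (f : (Fin b × Fin r → Bool) → ℝ)
    (hf : ∀ x, f x = F fun j => g j fun i => x (j, i)) :
    ∀ S : Finset (Fin b × Fin r), 1 ≤ S.card → S.card ≤ k → cubeCoeff f S = 0 := by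
  intro S h1 hk
  have hS : S.Nonempty := Finset.card_pos.mp h1
  -- Fourier-type expansion of F through indicators
  have hfF : ∀ x : Fin b × Fin r → Bool,
      f x = ∑ w : Fin b → Bool, F w *
        ∏ j, (1 + bval (g j fun i => x (j, i)) * bval (w j)) / 2 := by
    intro x
    rw [hf]
    set z : Fin b → Bool := fun j => g j fun i => x (j, i) with hz
    have hprod : ∀ w : Fin b → Bool,
        (∏ j, (1 + bval (z j) * bval (w j)) / 2) = if w = z then (1:ℝ) else 0 := by
      intro w
      by_cases hw : w = z
      · subst hw
        rw [if_pos rfl]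
        apply Finset.prod_eq_one
        intro j _
        rw [delta_eq]
        simp
      · rw [if_neg hw]
        obtain ⟨j, hj⟩ := Function.ne_iff.mp hw
        apply Finset.prod_eq_zero (Finset.mem_univ j)
        rw [delta_eq, if_neg (fun hh => hj hh.symm)]
    simp_rw [show ∀ w : Fin b → Bool, (∏ j, (1 + bval (g j fun i => x (j, i)) * bval (w j)) / 2)
        = if w = z then (1:ℝ) else 0 from hprod, mul_ite, mul_one, mul_zero]
    rw [Finset.sum_ite_eq' Finset.univ z F, if_pos (Finset.mem_univ z)]
  unfold cubeCoeff
  rw [div_eq_zero_iff]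
  left
  have hbv : ∀ (x : Fin b × Fin r → Bool) p, (if x p then (1:ℝ) else -1) = bval (x p) :=
    fun x p => rfl
  simp_rw [hbv, hfF, Finset.sum_mul]
  rw [Finset.sum_comm]
  simp_rw [mul_assoc, ← Finset.mul_sum]
  apply Finset.sum_eq_zero
  intro w _
  have hfac := blockFact (fun j y => (1 + bval (g j y) * bval (w j)) / 2) S
  rw [hfac]
  obtain ⟨p, hp⟩ := hS
  rw [Finset.prod_eq_zero (Finset.mem_univ p.1)]
  · exact mul_zero _
  set T : Finset (Fin r) := (S.filter fun q => q.1 = p.1).image Prod.snd with hT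
  have hmem : p.2 ∈ T := by
    apply Finset.mem_image_of_mem
    simp [Finset.mem_filter, hp]
  have hTne : T.Nonempty := ⟨p.2, hmem⟩
  have hT1 : 1 ≤ T.card := Finset.card_pos.mpr hTne
  have hTk : T.card ≤ k :=
    le_trans (Finset.card_image_le) (le_trans (Finset.card_filter_le _ _) hk)
  have hsplit : ∀ y : Fin r → Bool,
      ((1 + bval (g p.1 y) * bval (w p.1)) / 2) * ∏ i ∈ T, bval (y i)
      = (∏ i ∈ T, bval (y i)) / 2
        + (bval (w p.1) / 2) * (bval (g p.1 y) * ∏ i ∈ T, bval (y i)) := by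
    intro y; ring
  simp_rw [hsplit]
  rw [Finset.sum_add_distrib, ← Finset.sum_div, ← Finset.mul_sum, sumA T hTne]
  have hB : ∑ y : Fin r → Bool, bval (g p.1 y) * ∏ i ∈ T, bval (y i) = 0 := by
    have hgg := hg p.1 T hT1 hTk
    unfold cubeCoeff at hgg
    rw [div_eq_zero_iff] at hgg
    rcases hgg with hgg | hgg
    · exact hgg
    · exact absurd hgg (by positivity)
  rw [hB]
  norm_num
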